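/- Let $J$ be any ideal of $\mathbb{C}[[u,t]]$ invariant under the derivation $t\partial_t - u\partial_u$. Then every associated (minimal) prime of $J$ is among $(0)$, $(u)$, $(t)$, $(u,t)$; consequently the radical $\sqrt{J}$ is an intersection of some of these four ideals. -/

import Mathlib

/-- The derivation `t∂t - u∂u` on `ℂ[[u,t]]`, where `u = X 0` and `t = X 1`:
it multiplies the monomial `u^a t^b` by `b - a`. -/
noncomputable def Dtu (f : MvPowerSeries (Fin 2) ℂ) : MvPowerSeries (Fin 2) ℂ :=
  fun d => (((d 1 : ℤ) - (d 0 : ℤ) : ℤ) : ℂ) * MvPowerSeries.coeff d f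

open MvPowerSeries Finsupp
noncomputable section
abbrev RR := MvPowerSeries (Fin 2) ℂ

/-- ideal of series with all coefficients of total degree < N vanishing -/
def T (N : ℕ) : Ideal RR where
  carrier := {f | ∀ e : Fin 2 →₀ ℕ, e 0 + e 1 < N → MvPowerSeries.coeff e f = 0}
  add_mem' := by intro a b ha hb e he; rw [map_add, ha e he, hb e he, add_zero]
  zero_mem' := by intro e he; simp
  smul_mem' := by
    intro c f hf e he
    rw [smul_eq_mul, MvPowerSeries.coeff_mul]
    apply Finset.sum_eq_zero
    rintro ⟨p, q⟩ hpq
    rw [Finset.HasAntidiagonal.mem_antidiagonal] at hpq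
    have h0 : p 0 + q 0 = e 0 := by rw [← hpq]; simp
    have h1 : p 1 + q 1 = e 1 := by rw [← hpq]; simp
    have : q 0 + q 1 < N := by omega
    rw [hf q this, mul_zero]

lemma mem_T {N : ℕ} {f : RR} :
    f ∈ T N ↔ ∀ e : Fin 2 →₀ ℕ, e 0 + e 1 < N → MvPowerSeries.coeff e f = 0 := Iff.rfl

lemma T_mono {M N : ℕ} (h : M ≤ N) : T N ≤ T M := by
  intro f hf e he; exact hf e (lt_of_lt_of_le he h)

lemma T_mul {a b : ℕ} {f g : RR} (hf : f ∈ T a) (hg : g ∈ T b) : f * g ∈ T (a + b) := by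
  intro e he
  rw [MvPowerSeries.coeff_mul]
  apply Finset.sum_eq_zero
  rintro ⟨p, q⟩ hpq
  rw [Finset.HasAntidiagonal.mem_antidiagonal] at hpq
  have h0 : p 0 + q 0 = e 0 := by rw [← hpq]; simp
  have h1 : p 1 + q 1 = e 1 := by rw [← hpq]; simp
  rcases lt_or_ge (p 0 + p 1) a with hp | hp
  · rw [hf p hp, zero_mul]
  · rw [hg q (by omega), mul_zero]

lemma eq_zero_of_mem_all {f : RR} (h : ∀ N, f ∈ T N) : f = 0 := by
  ext e
  rw [map_zero]
  exact h (e 0 + e 1 + 1) e (by omega)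

/-- monomial-order embedding: (total degree, then first exponent), encoded into ℕ -/
def θ (e : Fin 2 →₀ ℕ) : ℕ := (e 0 + e 1) ^ 2 + e 0

lemma θ_def (e : Fin 2 →₀ ℕ) : θ e = (e 0 + e 1) ^ 2 + e 0 := rfl

lemma θ_lt_of_deg_lt {e e' : Fin 2 →₀ ℕ} (h : e 0 + e 1 < e' 0 + e' 1) : θ e < θ e' := by
  have h2 : e 0 ≤ e 0 + e 1 := by omega
  rw [θ_def, θ_def]; nlinarith

lemma deg_le_of_θ_le {e e' : Fin 2 →₀ ℕ} (h : θ e ≤ θ e') : e 0 + e 1 ≤ e' 0 + e' 1 := by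
  by_contra hc
  exact absurd h (not_le.2 (θ_lt_of_deg_lt (by omega)))

lemma θ_fst_le {e e' : Fin 2 →₀ ℕ} (hdeg : e 0 + e 1 = e' 0 + e' 1) (h : θ e ≤ θ e') :
    e 0 ≤ e' 0 := by
  rw [θ_def, θ_def, hdeg] at h; omega

lemma fin2_ext {e e' : Fin 2 →₀ ℕ} (h0 : e 0 = e' 0) (h1 : e 1 = e' 1) : e = e' := by
  ext i
  fin_cases i
  · exact h0
  · exact h1

lemma θ_inj {e e' : Fin 2 →₀ ℕ} (h : θ e = θ e') : e = e' := by
  have hdeg : e 0 + e 1 = e' 0 + e' 1 := by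
    rcases lt_trichotomy (e 0 + e 1) (e' 0 + e' 1) with hl | he | hl
    · exact absurd h (ne_of_lt (θ_lt_of_deg_lt hl))
    · exact he
    · exact absurd h.symm (ne_of_lt (θ_lt_of_deg_lt hl))
  rw [θ_def, θ_def, hdeg] at h
  exact fin2_ext (by omega) (by omega)

/-- existence of the θ-minimal exponent of a nonzero series -/
lemma exists_lead {f : RR} (hf : f ≠ 0) :
    ∃ e, MvPowerSeries.coeff e f ≠ 0 ∧
      ∀ e', MvPowerSeries.coeff e' f ≠ 0 → θ e ≤ θ e' := by
  have hne : ∃ e, MvPowerSeries.coeff e f ≠ 0 := by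
    by_contra hc
    push_neg at hc
    exact hf (MvPowerSeries.ext fun e => by rw [hc e, map_zero])
  set A : Set ℕ := {n | ∃ e, θ e = n ∧ MvPowerSeries.coeff e f ≠ 0} with hA
  have hAne : A.Nonempty := by
    obtain ⟨e, he⟩ := hne
    exact ⟨θ e, e, rfl, he⟩
  obtain ⟨e, hth, he⟩ := Nat.sInf_mem hAne
  refine ⟨e, he, fun e' he' => ?_⟩
  rw [hth]
  exact Nat.sInf_le ⟨e', rfl, he'⟩

/-- Dickson-type finite basis for the set of leading exponents of an ideal -/
lemma exists_basis (S : Set (Fin 2 →₀ ℕ)) :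
    ∃ B : Finset (Fin 2 →₀ ℕ), (↑B ⊆ S) ∧ ∀ s ∈ S, ∃ b ∈ B, b ≤ s := by
  classical
  set M : Set (Fin 2 →₀ ℕ) := {s ∈ S | ∀ y ∈ S, ¬y < s} with hM
  have hanti : IsAntichain (· ≤ ·) M := by
    rintro a ⟨haS, ha⟩ b ⟨hbS, hb⟩ hne hle
    exact hb a haS (lt_of_le_of_ne hle hne)
  have hfin : M.Finite :=
    hanti.finite_of_partiallyWellOrderedOn ((Set.isPWO_of_wellQuasiOrderedLE M))
  refine ⟨hfin.toFinset, ?_, ?_⟩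
  · intro b hb
    have := (Set.Finite.mem_toFinset hfin).1 hb
    exact this.1
  · intro s hs
    -- pick θ-minimal element of {y ∈ S | y ≤ s}
    set A : Set ℕ := {n | ∃ y, θ y = n ∧ y ∈ S ∧ y ≤ s} with hA
    have hAne : A.Nonempty := ⟨θ s, s, rfl, hs, le_rfl⟩
    obtain ⟨y, hyth, hyS, hys⟩ := Nat.sInf_mem hAne
    refine ⟨y, (Set.Finite.mem_toFinset hfin).2 ⟨hyS, fun z hz hzy => ?_⟩, hys⟩
    have h1 : θ z ∈ A := ⟨z, rfl, hz, le_trans hzy.le hys⟩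
    have h2 : θ y ≤ θ z := hyth ▸ Nat.sInf_le h1
    -- θ z < θ y since z < y
    have hzle : θ z ≤ θ y := by
      have hd : z 0 + z 1 ≤ y 0 + y 1 := by
        have := hzy.le
        have h0 : z 0 ≤ y 0 := this 0
        have h1 : z 1 ≤ y 1 := this 1
        omega
      have h0 : z 0 ≤ y 0 := hzy.le 0
      rw [θ_def, θ_def]; nlinarith
    have : z = y := θ_inj (le_antisymm hzle h2)
    exact absurd this (ne_of_lt hzy)

/-- `x` is approximable by elements of `J` in every order -/
def Approx (J : Ideal RR) (x : RR) : Prop := ∀ N, ∃ g ∈ J, x - g ∈ T N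

lemma Approx.sub_mem {J : Ideal RR} {x g : RR} (hx : Approx J x) (hg : g ∈ J) :
    Approx J (x - g) := by
  intro N
  obtain ⟨g', hg', hT⟩ := hx N
  exact ⟨g' - g, J.sub_mem hg' hg, by rwa [show x - g - (g' - g) = x - g' by ring]⟩

/-- the leading-exponent set of an ideal -/
def LeadSet (J : Ideal RR) : Set (Fin 2 →₀ ℕ) :=
  {e | ∃ g ∈ J, MvPowerSeries.coeff e g ≠ 0 ∧
    ∀ e', MvPowerSeries.coeff e' g ≠ 0 → θ e ≤ θ e'}

/-- KEY closure lemma: an ideal of `ℂ[[u,t]]` contains every series it approximates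
to all orders. -/
theorem mem_of_approx {J : Ideal RR} {x : RR} (hx : Approx J x) : x ∈ J := by
  classical
  obtain ⟨B, hBS, hdom⟩ := exists_basis (LeadSet J)
  -- monic generators for each basis exponent
  have hgen : ∀ b : Fin 2 →₀ ℕ, ∃ g : RR, b ∈ B →
      (g ∈ J ∧ MvPowerSeries.coeff b g = 1 ∧
        ∀ e', MvPowerSeries.coeff e' g ≠ 0 → θ b ≤ θ e') := by
    intro b
    by_cases hb : b ∈ B
    · obtain ⟨g, hgJ, hgb, hmin⟩ := hBS hb
      refine ⟨(MvPowerSeries.C) ((MvPowerSeries.coeff b g)⁻¹) * g, fun _ =>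
        ⟨Ideal.mul_mem_left _ _ hgJ, ?_, ?_⟩⟩
      · rw [MvPowerSeries.coeff_C_mul]
        exact inv_mul_cancel₀ hgb
      · intro e' he'
        apply hmin
        rw [MvPowerSeries.coeff_C_mul] at he'
        exact right_ne_zero_of_mul he'
    · exact ⟨0, fun h => absurd h hb⟩
  choose gb hgb using hgen
  set C0 := B.sup (fun b => b 0 + b 1) with hC0
  have hgbJ : ∀ b ∈ B, gb b ∈ J := fun b hb => (hgb b hb).1
  have hgbT : ∀ b ∈ B, gb b ∈ T (b 0 + b 1) := by
    intro b hb
    rw [mem_T]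
    intro e he
    by_contra hc
    have h1 := (hgb b hb).2.2 e hc
    have h2 := deg_le_of_θ_le h1
    omega
  -- one full degree-clearing step
  have hstepkey : ∀ (N : ℕ) (r : RR), Approx J r → r ∈ T N →
      ∀ j : ℕ, ∃ δ : (Fin 2 →₀ ℕ) → RR, (∀ b, δ b ∈ T (N - C0)) ∧
        Approx J (r - ∑ b ∈ B, δ b * gb b) ∧
        (r - ∑ b ∈ B, δ b * gb b) ∈ T N ∧
        (∀ e : Fin 2 →₀ ℕ, e 0 + e 1 = N → e 0 < j →
          MvPowerSeries.coeff e (r - ∑ b ∈ B, δ b * gb b) = 0) := by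
    intro N r hr hrT j
    induction j with
    | zero =>
      refine ⟨0, fun b => (T _).zero_mem, ?_, ?_, fun e _ h => absurd h (Nat.not_lt_zero _)⟩
      · simpa using hr
      · simpa using hrT
    | succ j ih =>
      obtain ⟨δ, hδT, hδa, hδTN, hδe⟩ := ih
      set r' := r - ∑ b ∈ B, δ b * gb b with hr'def
      set ej : Fin 2 →₀ ℕ := Finsupp.single 0 j + Finsupp.single 1 (N - j) with hejdef
      have hej0 : ej 0 = j := by simp [hejdef, Finsupp.single_apply]
      have hej1 : ej 1 = N - j := by simp [hejdef, Finsupp.single_apply]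
      by_cases hc : j ≤ N ∧ MvPowerSeries.coeff ej r' ≠ 0
      · -- non-trivial step
        obtain ⟨hjN, hcne⟩ := hc
        have hejdeg : ej 0 + ej 1 = N := by omega
        obtain ⟨g, hgJ, hgT⟩ := hδa (N + 1)
        rw [mem_T] at hgT
        have hgcoeff : ∀ e : Fin 2 →₀ ℕ, e 0 + e 1 ≤ N →
            MvPowerSeries.coeff e g = MvPowerSeries.coeff e r' := by
          intro e he
          have h1 := hgT e (by omega)
          rw [map_sub, sub_eq_zero] at h1
          exact h1.symm
        have hgej : MvPowerSeries.coeff ej g ≠ 0 := by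
          rw [hgcoeff ej (le_of_eq hejdeg)]; exact hcne
        have hmin : ∀ e', MvPowerSeries.coeff e' g ≠ 0 → θ ej ≤ θ e' := by
          intro e' he'
          rcases le_or_gt (e' 0 + e' 1) N with hle | hgt
          · rw [hgcoeff e' hle] at he'
            have hdeg' : N ≤ e' 0 + e' 1 := by
              by_contra hc2
              exact he' ((mem_T.1 hδTN) e' (by omega))
            have hdege : e' 0 + e' 1 = N := le_antisymm hle hdeg'
            have hfst : j ≤ e' 0 := by
              by_contra hc2
              exact he' (hδe e' hdege (by omega))
            rw [θ_def, θ_def, hejdeg, hdege]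
            omega
          · exact le_of_lt (θ_lt_of_deg_lt (by omega))
        have hejS : ej ∈ LeadSet J := ⟨g, hgJ, hgej, hmin⟩
        obtain ⟨b, hbB, hble⟩ := hdom ej hejS
        set c := MvPowerSeries.coeff ej r' with hcdef
        set m := ej - b with hmdef
        have hble' : ∀ i, b i ≤ ej i := fun i => Finsupp.le_def.1 hble i
        have hmb : m + b = ej := tsub_add_cancel_of_le hble
        have hmb0 : m 0 + b 0 = ej 0 := by rw [← hmb]; simp
        have hmb1 : m 1 + b 1 = ej 1 := by rw [← hmb]; simp
        have hbC0 : b 0 + b 1 ≤ C0 := Finset.le_sup (f := fun b => b 0 + b 1) hbB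
        have hmT : (MvPowerSeries.monomial m c : RR) ∈ T (m 0 + m 1) := by
          rw [mem_T]
          intro e he
          rw [MvPowerSeries.coeff_monomial, if_neg]
          rintro rfl
          omega
        set δ' : (Fin 2 →₀ ℕ) → RR :=
          fun b' => if b' = b then δ b + MvPowerSeries.monomial m c else δ b' with hδ'def
        have hsum : ∑ b' ∈ B, δ' b' * gb b' =
            (∑ b' ∈ B, δ b' * gb b') + MvPowerSeries.monomial m c * gb b := by
          have hterm : ∀ b' ∈ B, δ' b' * gb b' =
              δ b' * gb b' + (if b' = b then MvPowerSeries.monomial m c * gb b' else 0) := by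
            intro b' _
            by_cases h : b' = b
            · subst h; simp [hδ'def, add_mul]
            · simp [hδ'def, h]
          rw [Finset.sum_congr rfl hterm, Finset.sum_add_distrib,
            Finset.sum_ite_eq' B b (fun b' => MvPowerSeries.monomial m c * gb b'), if_pos hbB]
        have hr''eq : r - ∑ b' ∈ B, δ' b' * gb b' =
            r' - MvPowerSeries.monomial m c * gb b := by
          rw [hsum, hr'def]; ring
        have hqJ : MvPowerSeries.monomial m c * gb b ∈ J :=
          Ideal.mul_mem_left _ _ (hgbJ b hbB)
        have hprodT : MvPowerSeries.monomial m c * gb b ∈ T N := by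
          have := T_mul hmT (hgbT b hbB)
          rwa [show m 0 + m 1 + (b 0 + b 1) = N by omega] at this
        refine ⟨δ', ?_, ?_, ?_, ?_⟩
        · intro b'
          simp only [hδ'def]
          split_ifs with h
          · exact (T _).add_mem (hδT b) (T_mono (by omega) hmT)
          · exact hδT b'
        · rw [hr''eq]; exact hδa.sub_mem hqJ
        · rw [hr''eq]; exact (T N).sub_mem hδTN hprodT
        · intro e hdeg hlt
          rw [hr''eq, map_sub]
          rcases Nat.lt_succ_iff_lt_or_eq.1 hlt with h | h
          · rw [hδe e hdeg h, MvPowerSeries.coeff_monomial_mul]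
            split_ifs with hle2
            · have hm0e : m 0 ≤ e 0 := Finsupp.le_def.1 hle2 0
              have hm1e : m 1 ≤ e 1 := Finsupp.le_def.1 hle2 1
              have hsub0 : (e - m) 0 = e 0 - m 0 := by simp [Finsupp.tsub_apply]
              have hsub1 : (e - m) 1 = e 1 - m 1 := by simp [Finsupp.tsub_apply]
              have hz : MvPowerSeries.coeff (e - m) (gb b) = 0 := by
                by_contra hne
                have h1 := (hgb b hbB).2.2 (e - m) hne
                have h2 : b 0 + b 1 = (e - m) 0 + (e - m) 1 := by omega
                have h3 := θ_fst_le h2 h1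
                omega
              rw [hz, mul_zero, sub_zero]
            · simp
          · have heej : e = ej := fin2_ext (by omega) (by omega)
            have hmle : m ≤ ej := by rw [hmdef]; exact tsub_le_self
            have hejm : ej - m = b := by rw [hmdef]; exact tsub_tsub_cancel_of_le hble
            rw [heej, MvPowerSeries.coeff_monomial_mul, if_pos hmle, hejm,
              (hgb b hbB).2.1, mul_one, ← hcdef]
            exact sub_self c
      · -- trivial step
        refine ⟨δ, hδT, hδa, hδTN, fun e hdeg hlt => ?_⟩
        rcases Nat.lt_succ_iff_lt_or_eq.1 hlt with h | h
        · exact hδe e hdeg h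
        · have hjN : j ≤ N := by omega
          have heej : e = ej := fin2_ext (by omega) (by omega)
          rw [heej]
          by_contra hne
          exact hc ⟨hjN, hne⟩
  -- packaged step
  have hstep : ∀ (N : ℕ) (r : RR), Approx J r → r ∈ T N →
      ∃ δ : (Fin 2 →₀ ℕ) → RR, (∀ b, δ b ∈ T (N - C0)) ∧
        Approx J (r - ∑ b ∈ B, δ b * gb b) ∧ (r - ∑ b ∈ B, δ b * gb b) ∈ T (N + 1) := by
    intro N r hr hrT
    obtain ⟨δ, h1, h2, h3, h4⟩ := hstepkey N r hr hrT (N + 1)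
    refine ⟨δ, h1, h2, ?_⟩
    rw [mem_T]
    intro e he
    rcases Nat.lt_succ_iff_lt_or_eq.1 he with h | h
    · exact (mem_T.1 h3) e h
    · exact h4 e h (by omega)
  -- skolemized step function
  have hDex : ∀ (N : ℕ) (r : RR), ∃ δ : (Fin 2 →₀ ℕ) → RR,
      Approx J r → r ∈ T N →
      ((∀ b, δ b ∈ T (N - C0)) ∧ Approx J (r - ∑ b ∈ B, δ b * gb b) ∧
        (r - ∑ b ∈ B, δ b * gb b) ∈ T (N + 1)) := by
    intro N r
    by_cases h : Approx J r ∧ r ∈ T N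
    · obtain ⟨δ, h1, h2, h3⟩ := hstep N r h.1 h.2
      exact ⟨δ, fun _ _ => ⟨h1, h2, h3⟩⟩
    · exact ⟨0, fun ha hT => absurd ⟨ha, hT⟩ h⟩
  choose D hD using hDex
  -- the sequence of remainders
  set rem : ℕ → RR :=
    fun N => Nat.rec x (fun M y => y - ∑ b ∈ B, D M y b * gb b) N with hremdef
  have hremS : ∀ N, rem (N + 1) = rem N - ∑ b ∈ B, D N (rem N) b * gb b := fun N => rfl
  have hinv : ∀ N, Approx J (rem N) ∧ rem N ∈ T N := by
    intro N
    induction N with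
    | zero => exact ⟨hx, by rw [mem_T]; intro e he; omega⟩
    | succ N ih =>
      have h := hD N (rem N) ih.1 ih.2
      rw [hremS]
      exact ⟨h.2.1, h.2.2⟩
  set δ : ℕ → (Fin 2 →₀ ℕ) → RR := fun N => D N (rem N) with hδdef
  have hδT : ∀ N b, δ N b ∈ T (N - C0) :=
    fun N b => (hD N (rem N) (hinv N).1 (hinv N).2).1 b
  have hremEq : ∀ N, rem N = x - ∑ M ∈ Finset.range N, ∑ b ∈ B, δ M b * gb b := by
    intro N
    induction N with
    | zero => show x = _; simp
    | succ N ih =>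
      rw [hremS, show D N (rem N) = δ N from rfl, ih, Finset.sum_range_succ]
      ring
  -- limit multipliers
  set H : (Fin 2 →₀ ℕ) → RR := fun b =>
    (fun e => ∑ M ∈ Finset.range (e 0 + e 1 + C0 + 1), MvPowerSeries.coeff e (δ M b))
    with hHdef
  have hHcoeff : ∀ b e, MvPowerSeries.coeff e (H b) =
      ∑ M ∈ Finset.range (e 0 + e 1 + C0 + 1), MvPowerSeries.coeff e (δ M b) := fun b e => rfl
  have hHpart : ∀ b N, (H b - ∑ M ∈ Finset.range N, δ M b) ∈ T (N - C0) := by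
    intro b N
    rw [mem_T]
    intro e he
    rw [map_sub, hHcoeff, map_sum]
    have hzero : ∀ M, e 0 + e 1 + C0 < M → MvPowerSeries.coeff e (δ M b) = 0 := by
      intro M hM
      exact (mem_T.1 (hδT M b)) e (by omega)
    have hNbig : e 0 + e 1 + C0 < N := by omega
    set L := max N (e 0 + e 1 + C0 + 1) with hL
    have hs1 : ∑ M ∈ Finset.range (e 0 + e 1 + C0 + 1), MvPowerSeries.coeff e (δ M b) =
        ∑ M ∈ Finset.range L, MvPowerSeries.coeff e (δ M b) := by
      apply Finset.sum_subset (Finset.range_subset_range.2 (le_max_right _ _))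
      intro M _ hM
      rw [Finset.mem_range, not_lt] at hM
      exact hzero M (by omega)
    have hs2 : ∑ M ∈ Finset.range N, MvPowerSeries.coeff e (δ M b) =
        ∑ M ∈ Finset.range L, MvPowerSeries.coeff e (δ M b) := by
      apply Finset.sum_subset (Finset.range_subset_range.2 (le_max_left _ _))
      intro M _ hM
      rw [Finset.mem_range, not_lt] at hM
      exact hzero M (by omega)
    rw [hs1, hs2, sub_self]
  -- the final identity
  have hfinal : ∀ K, (x - ∑ b ∈ B, H b * gb b) ∈ T K := by
    intro K
    have hid : x - ∑ b ∈ B, H b * gb b =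
        rem (K + C0) - ∑ b ∈ B, (H b - ∑ M ∈ Finset.range (K + C0), δ M b) * gb b := by
      rw [hremEq (K + C0), Finset.sum_comm]
      have e1 : ∀ b ∈ B, (H b - ∑ M ∈ Finset.range (K + C0), δ M b) * gb b =
          H b * gb b - ∑ M ∈ Finset.range (K + C0), δ M b * gb b := by
        intro b _
        rw [sub_mul, Finset.sum_mul]
      rw [Finset.sum_congr rfl e1, Finset.sum_sub_distrib]
      abel
    rw [hid]
    apply (T K).sub_mem
    · exact T_mono (by omega) ((hinv (K + C0)).2)
    · apply Ideal.sum_mem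
      intro b _
      have h1 := hHpart b (K + C0)
      rw [show K + C0 - C0 = K by omega] at h1
      exact Ideal.mul_mem_right _ _ h1
  have hxeq : x = ∑ b ∈ B, H b * gb b :=
    sub_eq_zero.1 (eq_zero_of_mem_all hfinal)
  rw [hxeq]
  exact Ideal.sum_mem _ fun b hb => Ideal.mul_mem_left _ _ (hgbJ b hb)

def pop (S : Finset ℤ) (f : RR) : RR :=
  fun e => (∏ v ∈ S, ((((e 1 : ℤ) - (e 0 : ℤ) - v : ℤ) : ℂ))) * MvPowerSeries.coeff e f

lemma coeff_pop (S : Finset ℤ) (f : RR) (e : Fin 2 →₀ ℕ) :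
    MvPowerSeries.coeff e (pop S f) =
      (∏ v ∈ S, ((((e 1 : ℤ) - (e 0 : ℤ) - v : ℤ) : ℂ))) * MvPowerSeries.coeff e f := rfl

def wcomp (w : ℤ) (f : RR) : RR :=
  fun e => if (e 1 : ℤ) - (e 0 : ℤ) = w then MvPowerSeries.coeff e f else 0

lemma coeff_wcomp (w : ℤ) (f : RR) (e : Fin 2 →₀ ℕ) :
    MvPowerSeries.coeff e (wcomp w f) =
      if (e 1 : ℤ) - (e 0 : ℤ) = w then MvPowerSeries.coeff e f else 0 := rfl

lemma coeff_Dtu (g : RR) (e : Fin 2 →₀ ℕ) :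
    MvPowerSeries.coeff e (Dtu g) =
      (((e 1 : ℤ) - (e 0 : ℤ) : ℤ) : ℂ) * MvPowerSeries.coeff e g := rfl

lemma prodop_mem {J : Ideal RR} (hinv : ∀ f ∈ J, Dtu f ∈ J) {f : RR} (hf : f ∈ J)
    (S : Finset ℤ) : pop S f ∈ J := by
  classical
  induction S using Finset.induction with
  | empty =>
    have : pop ∅ f = f := by
      apply MvPowerSeries.ext
      intro e
      rw [coeff_pop, Finset.prod_empty, one_mul]
    rwa [this]
  | @insert a S ha ih =>
    have heq : pop (insert a S) f =
        Dtu (pop S f) - (MvPowerSeries.C ((a : ℤ) : ℂ)) * pop S f := by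
      apply MvPowerSeries.ext
      intro e
      rw [map_sub, MvPowerSeries.coeff_C_mul, coeff_pop, Finset.prod_insert ha, coeff_Dtu,
        coeff_pop]
      push_cast
      ring
    rw [heq]
    exact J.sub_mem (hinv _ ih) (Ideal.mul_mem_left _ _ ih)

/-- weight component of an element of an invariant ideal stays in the ideal -/
lemma weight_component_mem {J : Ideal RR} (hinv : ∀ f ∈ J, Dtu f ∈ J) {f : RR} (hf : f ∈ J)
    (w : ℤ) : wcomp w f ∈ J := by
  classical
  apply mem_of_approx
  intro N
  set S := (Finset.Icc (-(N : ℤ)) (N : ℤ)).erase w with hS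
  set c := ∏ v ∈ S, ((w - v : ℤ) : ℂ) with hc
  have hcne : c ≠ 0 := by
    rw [hc]
    apply Finset.prod_ne_zero_iff.2
    intro v hv
    have hvw : v ≠ w := (Finset.mem_erase.1 hv).1
    simp only [ne_eq, Int.cast_eq_zero, sub_eq_zero]
    omega
  refine ⟨MvPowerSeries.C c⁻¹ * pop S f,
    Ideal.mul_mem_left _ _ (prodop_mem hinv hf S), ?_⟩
  rw [mem_T]
  intro e he
  rw [map_sub, MvPowerSeries.coeff_C_mul, coeff_wcomp, coeff_pop]
  by_cases h : (e 1 : ℤ) - (e 0 : ℤ) = w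
  · rw [if_pos h]
    have hprod : (∏ v ∈ S, ((((e 1 : ℤ) - (e 0 : ℤ) - v : ℤ) : ℂ))) = c := by
      rw [hc]
      apply Finset.prod_congr rfl
      intro v _
      rw [h]
    rw [hprod, ← mul_assoc, inv_mul_cancel₀ hcne, one_mul, sub_self]
  · rw [if_neg h]
    have hwmem : ((e 1 : ℤ) - (e 0 : ℤ)) ∈ S := by
      rw [hS, Finset.mem_erase, Finset.mem_Icc]
      constructor
      · exact h
      · constructor <;> omega
    have hzero : (∏ v ∈ S, ((((e 1 : ℤ) - (e 0 : ℤ) - v : ℤ) : ℂ))) = 0 := by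
      apply Finset.prod_eq_zero hwmem
      simp
    rw [hzero, zero_mul, mul_zero, zero_sub, neg_eq_zero]

/-- a nonzero invariant proper ideal contains a monomial -/
lemma exists_monomial_mem {J : Ideal RR} (hinv : ∀ f ∈ J, Dtu f ∈ J) (hJtop : J ≠ ⊤)
    {f : RR} (hf : f ∈ J) (hf0 : f ≠ 0) :
    ∃ d : Fin 2 →₀ ℕ, d ≠ 0 ∧ MvPowerSeries.monomial d 1 ∈ J := by
  classical
  obtain ⟨d, hd, hdmin⟩ := exists_lead hf0
  set w : ℤ := (d 1 : ℤ) - (d 0 : ℤ) with hw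
  have hfwJ : wcomp w f ∈ J := weight_component_mem hinv hf w
  have hfwd : MvPowerSeries.coeff d (wcomp w f) = MvPowerSeries.coeff d f := by
    rw [coeff_wcomp, if_pos rfl]
  have hsupp : ∀ e, MvPowerSeries.coeff e (wcomp w f) ≠ 0 → d ≤ e := by
    intro e he
    rw [coeff_wcomp] at he
    by_cases h : (e 1 : ℤ) - (e 0 : ℤ) = w
    · rw [if_pos h] at he
      have h1 := deg_le_of_θ_le (hdmin e he)
      have h0 : d 0 ≤ e 0 ∧ d 1 ≤ e 1 := by
        rw [hw] at h
        omega
      intro i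
      fin_cases i
      · exact h0.1
      · exact h0.2
    · rw [if_neg h] at he
      exact absurd rfl he
  set G : RR := (fun e => MvPowerSeries.coeff (e + d) (wcomp w f)) with hG
  have hfactor : wcomp w f = MvPowerSeries.monomial d 1 * G := by
    apply MvPowerSeries.ext
    intro e
    rw [MvPowerSeries.coeff_monomial_mul]
    by_cases h : d ≤ e
    · rw [if_pos h, one_mul]
      show _ = MvPowerSeries.coeff (e - d + d) (wcomp w f)
      rw [tsub_add_cancel_of_le h]
    · rw [if_neg h]
      by_contra hne
      exact h (hsupp e hne)
  have hGunit : IsUnit G := by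
    rw [MvPowerSeries.isUnit_iff_constantCoeff]
    have h2 : MvPowerSeries.constantCoeff G = MvPowerSeries.coeff d (wcomp w f) := by
      rw [← MvPowerSeries.coeff_zero_eq_constantCoeff_apply]
      show MvPowerSeries.coeff (0 + d) (wcomp w f) = _
      rw [zero_add]
    rw [h2, hfwd]
    exact isUnit_iff_ne_zero.2 hd
  obtain ⟨u, hu⟩ := hGunit
  have hmon : (MvPowerSeries.monomial d 1 : RR) = wcomp w f * ↑u⁻¹ := by
    rw [hfactor, mul_assoc, ← hu, Units.mul_inv, mul_one]
  have hdne : d ≠ 0 := by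
    intro hd0
    apply hJtop
    apply Ideal.eq_top_of_isUnit_mem J hf
    rw [MvPowerSeries.isUnit_iff_constantCoeff]
    apply isUnit_iff_ne_zero.2
    rw [← MvPowerSeries.coeff_zero_eq_constantCoeff_apply, ← hd0]
    exact hd
  exact ⟨d, hdne, hmon ▸ Ideal.mul_mem_right _ _ hfwJ⟩

def shiftX (i : Fin 2) (f : RR) : RR :=
  fun e => MvPowerSeries.coeff (e + Finsupp.single i 1) f

def vpart (i : Fin 2) (f : RR) : RR :=
  fun e => if e i = 0 then MvPowerSeries.coeff e f else 0

lemma coeff_vpart (i : Fin 2) (f : RR) (e : Fin 2 →₀ ℕ) :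
    MvPowerSeries.coeff e (vpart i f) = if e i = 0 then MvPowerSeries.coeff e f else 0 := rfl

lemma coeff_shiftX (i : Fin 2) (f : RR) (e : Fin 2 →₀ ℕ) :
    MvPowerSeries.coeff e (shiftX i f) = MvPowerSeries.coeff (e + Finsupp.single i 1) f := rfl

lemma X_eq_monomial (i : Fin 2) :
    (MvPowerSeries.X i : RR) = MvPowerSeries.monomial (Finsupp.single i 1) 1 := rfl

lemma decompX (i : Fin 2) (f : RR) : f = MvPowerSeries.X i * shiftX i f + vpart i f := by
  apply MvPowerSeries.ext
  intro e
  rw [map_add, X_eq_monomial, MvPowerSeries.coeff_monomial_mul, coeff_vpart]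
  by_cases h : Finsupp.single i 1 ≤ e
  · have h1 : 1 ≤ e i := Finsupp.single_le_iff.1 h
    rw [if_pos h, one_mul, coeff_shiftX, tsub_add_cancel_of_le h, if_neg (by omega), add_zero]
  · have h1 : e i = 0 := by
      by_contra hne
      exact h (Finsupp.single_le_iff.2 (by omega))
    rw [if_neg h, if_pos h1, zero_add]

lemma fin2_cases_ne : ∀ i i' c : Fin 2, i ≠ i' → c = i ∨ c = i' := by decide

lemma factor_pow (i i' : Fin 2) (hii' : i ≠ i') (h : RR) (k : ℕ)
    (hsupp : ∀ e : Fin 2 →₀ ℕ, MvPowerSeries.coeff e h ≠ 0 → e i = 0)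
    (hlow : ∀ j, j < k → MvPowerSeries.coeff (Finsupp.single i' j) h = 0) :
    ∃ G : RR, MvPowerSeries.constantCoeff G =
        MvPowerSeries.coeff (Finsupp.single i' k) h ∧
      h = MvPowerSeries.X i' ^ k * G := by
  classical
  refine ⟨(@id RR fun e => if e i = 0 then MvPowerSeries.coeff (e + Finsupp.single i' k) h else 0 :
    RR), ?_, ?_⟩
  · rw [← MvPowerSeries.coeff_zero_eq_constantCoeff_apply]
    show (if (0 : Fin 2 →₀ ℕ) i = 0 then
      MvPowerSeries.coeff ((0 : Fin 2 →₀ ℕ) + Finsupp.single i' k) h else 0) = _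
    rw [if_pos (by simp : ((0 : Fin 2 →₀ ℕ) i = 0)), zero_add]
  · apply MvPowerSeries.ext
    intro e
    rw [MvPowerSeries.X_pow_eq, MvPowerSeries.coeff_monomial_mul]
    by_cases hle : Finsupp.single i' k ≤ e
    · rw [if_pos hle, one_mul]
      show _ = (if (e - Finsupp.single i' k) i = 0 then
        MvPowerSeries.coeff ((e - Finsupp.single i' k) + Finsupp.single i' k) h else 0)
      rw [tsub_add_cancel_of_le hle]
      have hsub : (e - Finsupp.single i' k) i = e i := by
        rw [Finsupp.tsub_apply, Finsupp.single_apply, if_neg hii'.symm]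
        omega
      rw [hsub]
      by_cases hei : e i = 0
      · rw [if_pos hei]
      · rw [if_neg hei]
        by_contra hne
        exact hei (hsupp e hne)
    · rw [if_neg hle]
      have hk : ¬ k ≤ e i' := fun hh => hle (Finsupp.single_le_iff.2 hh)
      by_cases hei : e i = 0
      · have heq : e = Finsupp.single i' (e i') := by
          apply Finsupp.ext
          intro c
          rcases fin2_cases_ne i i' c hii' with rfl | rfl
          · rw [Finsupp.single_apply, if_neg hii'.symm, hei]
          · rw [Finsupp.single_apply, if_pos rfl]
        rw [heq]
        exact hlow (e i') (by omega)
      · by_contra hne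
        exact hei (hsupp e hne)

lemma const_zero_of_mem {P : Ideal RR} (hP : P ≠ ⊤) {f : RR} (hf : f ∈ P) :
    MvPowerSeries.coeff 0 f = 0 := by
  by_contra hc
  apply hP
  apply Ideal.eq_top_of_isUnit_mem P hf
  rw [MvPowerSeries.isUnit_iff_constantCoeff]
  rw [← MvPowerSeries.coeff_zero_eq_constantCoeff_apply]
  exact isUnit_iff_ne_zero.2 hc

lemma mem_span_XX {P : Ideal RR} (hP : P ≠ ⊤) :
    P ≤ Ideal.span {MvPowerSeries.X 0, MvPowerSeries.X 1} := by
  intro f hf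
  have hconst : MvPowerSeries.coeff 0 f = 0 := const_zero_of_mem hP hf
  have hsupp : ∀ e : Fin 2 →₀ ℕ, MvPowerSeries.coeff e (vpart 0 f) ≠ 0 → e 0 = 0 := by
    intro e he
    rw [coeff_vpart] at he
    by_cases h : e 0 = 0
    · exact h
    · rw [if_neg h] at he; exact absurd rfl he
  have hlow : ∀ j, j < 1 → MvPowerSeries.coeff (Finsupp.single 1 j) (vpart 0 f) = 0 := by
    intro j hj
    interval_cases j
    rw [Finsupp.single_zero, coeff_vpart, if_pos (by simp : ((0 : Fin 2 →₀ ℕ) 0 = 0))]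
    exact hconst
  obtain ⟨G, _, hfac⟩ := factor_pow 0 1 (by decide) (vpart 0 f) 1 hsupp hlow
  rw [pow_one] at hfac
  rw [Ideal.mem_span_pair]
  refine ⟨shiftX 0 f, G, ?_⟩
  rw [mul_comm (shiftX 0 f) _, mul_comm G _, ← hfac]
  exact (decompX 0 f).symm

lemma branchX0 {P : Ideal RR} (hP : P.IsPrime) (hX : MvPowerSeries.X 0 ∈ P) :
    P = Ideal.span {MvPowerSeries.X 0} ∨
      P = Ideal.span {MvPowerSeries.X 0, MvPowerSeries.X 1} := by
  classical
  by_cases hle : P ≤ Ideal.span {MvPowerSeries.X 0}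
  · left
    exact le_antisymm hle (Ideal.span_le.2 (Set.singleton_subset_iff.2 hX))
  · right
    obtain ⟨f, hfP, hfn⟩ := SetLike.not_le_iff_exists.1 hle
    have hvP : vpart 0 f ∈ P := by
      have hv : vpart 0 f = f - MvPowerSeries.X 0 * shiftX 0 f :=
        eq_sub_of_add_eq (by rw [add_comm]; exact (decompX 0 f).symm)
      rw [hv]
      exact P.sub_mem hfP (Ideal.mul_mem_right _ _ hX)
    have hvne : vpart 0 f ≠ 0 := by
      intro h0
      apply hfn
      rw [Ideal.mem_span_singleton]
      refine ⟨shiftX 0 f, ?_⟩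
      have hd := decompX 0 f
      rw [h0, add_zero] at hd
      exact hd
    have hsupp : ∀ e : Fin 2 →₀ ℕ, MvPowerSeries.coeff e (vpart 0 f) ≠ 0 → e 0 = 0 := by
      intro e he
      rw [coeff_vpart] at he
      by_cases h : e 0 = 0
      · exact h
      · rw [if_neg h] at he; exact absurd rfl he
    have hex : ∃ j, MvPowerSeries.coeff (Finsupp.single 1 j) (vpart 0 f) ≠ 0 := by
      have : ∃ e, MvPowerSeries.coeff e (vpart 0 f) ≠ 0 := by
        by_contra hc
        push_neg at hc
        exact hvne (MvPowerSeries.ext fun e => by rw [hc e, map_zero])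
      obtain ⟨e, he⟩ := this
      refine ⟨e 1, ?_⟩
      have heq : Finsupp.single 1 (e 1) = e :=
        fin2_ext (by rw [Finsupp.single_apply, if_neg (by decide), hsupp e he])
          (by rw [Finsupp.single_apply, if_pos rfl])
      rw [heq]
      exact he
    set k := Nat.find hex with hk
    have hkspec := Nat.find_spec hex
    have hklow : ∀ j, j < k → MvPowerSeries.coeff (Finsupp.single 1 j) (vpart 0 f) = 0 := by
      intro j hj
      have := Nat.find_min hex hj
      simpa using this
    obtain ⟨G, hGc, hfac⟩ := factor_pow 0 1 (by decide) (vpart 0 f) k hsupp hklow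
    have hGu : IsUnit G := by
      rw [MvPowerSeries.isUnit_iff_constantCoeff, hGc]
      exact isUnit_iff_ne_zero.2 hkspec
    obtain ⟨u, hu⟩ := hGu
    have hXkP : (MvPowerSeries.X 1 : RR) ^ k ∈ P := by
      have : (MvPowerSeries.X 1 : RR) ^ k = vpart 0 f * ↑u⁻¹ := by
        rw [hfac, mul_assoc, ← hu, Units.mul_inv, mul_one]
      rw [this]
      exact Ideal.mul_mem_right _ _ hvP
    have hkne : k ≠ 0 := by
      intro h0
      apply hkspec
      rw [hk] at h0
      rw [h0, Finsupp.single_zero, coeff_vpart,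
        if_pos (by simp : ((0 : Fin 2 →₀ ℕ) 0 = 0))]
      exact const_zero_of_mem hP.ne_top hfP
    have hX1 : (MvPowerSeries.X 1 : RR) ∈ P := hP.mem_of_pow_mem k hXkP
    refine le_antisymm (mem_span_XX hP.ne_top) ?_
    rw [Ideal.span_le]
    intro z hz
    rcases hz with rfl | hz
    · exact hX
    · rw [Set.mem_singleton_iff] at hz
      rw [hz]
      exact hX1

lemma branchX1 {P : Ideal RR} (hP : P.IsPrime) (hX : MvPowerSeries.X 1 ∈ P) :
    P = Ideal.span {MvPowerSeries.X 1} ∨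
      P = Ideal.span {MvPowerSeries.X 0, MvPowerSeries.X 1} := by
  classical
  by_cases hle : P ≤ Ideal.span {MvPowerSeries.X 1}
  · left
    exact le_antisymm hle (Ideal.span_le.2 (Set.singleton_subset_iff.2 hX))
  · right
    obtain ⟨f, hfP, hfn⟩ := SetLike.not_le_iff_exists.1 hle
    have hvP : vpart 1 f ∈ P := by
      have hv : vpart 1 f = f - MvPowerSeries.X 1 * shiftX 1 f :=
        eq_sub_of_add_eq (by rw [add_comm]; exact (decompX 1 f).symm)
      rw [hv]
      exact P.sub_mem hfP (Ideal.mul_mem_right _ _ hX)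
    have hvne : vpart 1 f ≠ 0 := by
      intro h0
      apply hfn
      rw [Ideal.mem_span_singleton]
      refine ⟨shiftX 1 f, ?_⟩
      have hd := decompX 1 f
      rw [h0, add_zero] at hd
      exact hd
    have hsupp : ∀ e : Fin 2 →₀ ℕ, MvPowerSeries.coeff e (vpart 1 f) ≠ 0 → e 1 = 0 := by
      intro e he
      rw [coeff_vpart] at he
      by_cases h : e 1 = 0
      · exact h
      · rw [if_neg h] at he; exact absurd rfl he
    have hex : ∃ j, MvPowerSeries.coeff (Finsupp.single 0 j) (vpart 1 f) ≠ 0 := by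
      have hne : ∃ e, MvPowerSeries.coeff e (vpart 1 f) ≠ 0 := by
        by_contra hc
        push_neg at hc
        exact hvne (MvPowerSeries.ext fun e => by rw [hc e, map_zero])
      obtain ⟨e, he⟩ := hne
      refine ⟨e 0, ?_⟩
      have heq : Finsupp.single 0 (e 0) = e :=
        fin2_ext (by rw [Finsupp.single_apply, if_pos rfl])
          (by rw [Finsupp.single_apply, if_neg (by decide), hsupp e he])
      rw [heq]
      exact he
    set k := Nat.find hex with hk
    have hkspec := Nat.find_spec hex
    have hklow : ∀ j, j < k → MvPowerSeries.coeff (Finsupp.single 0 j) (vpart 1 f) = 0 := by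
      intro j hj
      have := Nat.find_min hex hj
      simpa using this
    obtain ⟨G, hGc, hfac⟩ := factor_pow 1 0 (by decide) (vpart 1 f) k hsupp hklow
    have hGu : IsUnit G := by
      rw [MvPowerSeries.isUnit_iff_constantCoeff, hGc]
      exact isUnit_iff_ne_zero.2 hkspec
    obtain ⟨u, hu⟩ := hGu
    have hXkP : (MvPowerSeries.X 0 : RR) ^ k ∈ P := by
      have heq : (MvPowerSeries.X 0 : RR) ^ k = vpart 1 f * ↑u⁻¹ := by
        rw [hfac, mul_assoc, ← hu, Units.mul_inv, mul_one]
      rw [heq]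
      exact Ideal.mul_mem_right _ _ hvP
    have hkne : k ≠ 0 := by
      intro h0
      apply hkspec
      rw [hk] at h0
      rw [h0, Finsupp.single_zero, coeff_vpart,
        if_pos (by simp : ((0 : Fin 2 →₀ ℕ) 1 = 0))]
      exact const_zero_of_mem hP.ne_top hfP
    have hX0 : (MvPowerSeries.X 0 : RR) ∈ P := hP.mem_of_pow_mem k hXkP
    refine le_antisymm (mem_span_XX hP.ne_top) ?_
    rw [Ideal.span_le]
    intro z hz
    rcases hz with rfl | hz
    · exact hX0
    · rw [Set.mem_singleton_iff] at hz
      rw [hz]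
      exact hX

lemma monomial_eq_prod (d : Fin 2 →₀ ℕ) :
    MvPowerSeries.monomial d 1 =
      (MvPowerSeries.X 0 : RR) ^ (d 0) * (MvPowerSeries.X 1 : RR) ^ (d 1) := by
  have hd : Finsupp.single (0 : Fin 2) (d 0) + Finsupp.single (1 : Fin 2) (d 1) = d := by
    apply fin2_ext
    · rw [Finsupp.add_apply, Finsupp.single_apply, Finsupp.single_apply]
      simp
    · rw [Finsupp.add_apply, Finsupp.single_apply, Finsupp.single_apply]
      simp
  rw [MvPowerSeries.X_pow_eq, MvPowerSeries.X_pow_eq, MvPowerSeries.monomial_mul_monomial,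
    one_mul, hd]


/-- For an ideal `J` of `ℂ[[u,t]]` invariant under `t∂t - u∂u`, every minimal prime of `J`
is among `(0)`, `(u)`, `(t)`, `(u,t)`; consequently `√J` is an intersection of some of
these four ideals. -/
theorem stmt1 (J : Ideal (MvPowerSeries (Fin 2) ℂ)) (hinv : ∀ f ∈ J, Dtu f ∈ J) :
    (∀ P ∈ J.minimalPrimes,
        P = ⊥ ∨ P = Ideal.span {MvPowerSeries.X 0} ∨ P = Ideal.span {MvPowerSeries.X 1} ∨
          P = Ideal.span {MvPowerSeries.X 0, MvPowerSeries.X 1}) ∧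
    ∃ S : Set (Ideal (MvPowerSeries (Fin 2) ℂ)),
      S ⊆ {⊥, Ideal.span {MvPowerSeries.X 0}, Ideal.span {MvPowerSeries.X 1},
            Ideal.span {MvPowerSeries.X 0, MvPowerSeries.X 1}} ∧
      J.radical = sInf S := by

  have key : ∀ P ∈ J.minimalPrimes,
      P = ⊥ ∨ P = Ideal.span {MvPowerSeries.X 0} ∨ P = Ideal.span {MvPowerSeries.X 1} ∨
        P = Ideal.span {MvPowerSeries.X 0, MvPowerSeries.X 1} := by
    intro P hP
    have hPp : P.IsPrime := hP.1.1
    have hJP : J ≤ P := hP.1.2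
    haveI : IsDomain RR := NoZeroDivisors.to_isDomain RR
    by_cases hJbot : J = ⊥
    · left
      have hb : ((⊥ : Ideal RR).IsPrime ∧ J ≤ ⊥) := ⟨Ideal.bot_prime, by rw [hJbot]⟩
      exact le_antisymm (hP.2 hb bot_le) bot_le
    · by_cases hJtop : J = ⊤
      · exact absurd (top_le_iff.1 (hJtop ▸ hJP)) hPp.ne_top
      · obtain ⟨f, hfJ, hf0⟩ := (Submodule.ne_bot_iff J).1 hJbot
        obtain ⟨d, hd0, hdJ⟩ := exists_monomial_mem hinv hJtop hfJ hf0
        have hdP : MvPowerSeries.monomial d 1 ∈ P := hJP hdJ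
        rw [monomial_eq_prod] at hdP
        rcases hPp.mem_or_mem hdP with h | h
        · rcases branchX0 hPp (hPp.mem_of_pow_mem _ h) with h' | h'
          · exact Or.inr (Or.inl h')
          · exact Or.inr (Or.inr (Or.inr h'))
        · rcases branchX1 hPp (hPp.mem_of_pow_mem _ h) with h' | h'
          · exact Or.inr (Or.inr (Or.inl h'))
          · exact Or.inr (Or.inr (Or.inr h'))
  refine ⟨key, J.minimalPrimes, ?_, Ideal.sInf_minimalPrimes.symm⟩
  intro P hP
  rcases key P hP with h | h | h | h <;> simp [h]

end
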